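/- Let a, b ≥ 0, C ≥ 0, D ≥ 0, and let f : [0, a] × [0, b] → [0, ∞) be continuous and satisfy f(u, ū) ≤ D + C∫₀ᵘ f(u′, ū) du′ + C∫₀^{ū} f(u, ū′) dū′ for all (u, ū) ∈ [0, a] × [0, b]. Then f(u, ū) ≤ D · e^{2C(u + ū)} for all (u, ū) ∈ [0, a] × [0, b]. -/

import Mathlib

open Real MeasureTheory intervalIntegral Filter

lemma stmt14_integ_pow (u v : ℝ) (n : ℕ) :
    ∫ s in (0:ℝ)..u, (s + v) ^ n = ((u + v) ^ (n + 1) - v ^ (n + 1)) / (n + 1) := by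
  have h : ∀ s ∈ Set.uIcc (0:ℝ) u,
      HasDerivAt (fun t => (t + v) ^ (n + 1) / (n + 1)) ((s + v) ^ n) s := by
    intro s _
    have h1 : HasDerivAt (fun t : ℝ => (t + v) ^ (n + 1))
        ((n + 1 : ℕ) * (s + v) ^ n * 1) s :=
      ((hasDerivAt_id s).add_const v).pow (n + 1)
    have h2 := h1.div_const ((n : ℝ) + 1)
    have hne : ((n : ℝ) + 1) ≠ 0 := by positivity
    refine h2.congr_deriv ?_
    push_cast
    field_simp
    try ring
  have hint : IntervalIntegrable (fun s : ℝ => (s + v) ^ n) volume 0 u :=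
    (Continuous.intervalIntegrable (by continuity) 0 u)
  have := intervalIntegral.integral_eq_sub_of_hasDerivAt h hint
  rw [this]
  have hne : ((n : ℝ) + 1) ≠ 0 := by positivity
  push_cast
  field_simp
  try ring

lemma stmt14_integ_exp (c u v : ℝ) (hc : c ≠ 0) :
    ∫ s in (0:ℝ)..u, Real.exp (c * (s + v))
      = (Real.exp (c * (u + v)) - Real.exp (c * v)) / c := by
  have h : ∀ s ∈ Set.uIcc (0:ℝ) u,
      HasDerivAt (fun t => Real.exp (c * (t + v)) / c) (Real.exp (c * (s + v))) s := by
    intro s _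
    have h1 : HasDerivAt (fun t : ℝ => c * (t + v)) c s := by
      simpa using ((hasDerivAt_id s).add_const v).const_mul c
    have h2 := (h1.exp).div_const c
    refine h2.congr_deriv ?_
    field_simp
  have hint : IntervalIntegrable (fun s : ℝ => Real.exp (c * (s + v))) volume 0 u :=
    (Continuous.intervalIntegrable (by continuity) 0 u)
  rw [intervalIntegral.integral_eq_sub_of_hasDerivAt h hint]
  rw [zero_add]
  ring

/-- One-variable integral bound used in the induction step. -/
lemma stmt14_helper (C D M v u : ℝ) (hC : 0 < C) (hD : 0 ≤ D) (hM : 0 ≤ M)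
    (hv : 0 ≤ v) (hu : 0 ≤ u) (n : ℕ) :
    C * ∫ s in (0:ℝ)..u,
        (D * Real.exp (2 * C * (s + v)) + M * (2 * C * (s + v)) ^ n / n.factorial)
      ≤ D * (Real.exp (2 * C * (u + v)) - 1) / 2
        + M * (2 * C * (u + v)) ^ (n + 1) / (2 * (n + 1).factorial) := by
  have h2C : (2 * C) ≠ 0 := by positivity
  have hint1 : IntervalIntegrable (fun s : ℝ => D * Real.exp (2 * C * (s + v))) volume 0 u :=
    (Continuous.intervalIntegrable (by continuity) 0 u)
  have hint2 : IntervalIntegrable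
      (fun s : ℝ => M * (2 * C * (s + v)) ^ n / n.factorial) volume 0 u :=
    (Continuous.intervalIntegrable (by continuity) 0 u)
  rw [intervalIntegral.integral_add hint1 hint2]
  have e1 : ∫ s in (0:ℝ)..u, D * Real.exp (2 * C * (s + v))
      = D * ((Real.exp (2 * C * (u + v)) - Real.exp (2 * C * v)) / (2 * C)) := by
    rw [intervalIntegral.integral_const_mul, stmt14_integ_exp (2 * C) u v h2C]
  have e2 : ∫ s in (0:ℝ)..u, M * (2 * C * (s + v)) ^ n / n.factorial
      = (M * (2 * C) ^ n / n.factorial) * (((u + v) ^ (n + 1) - v ^ (n + 1)) / (n + 1)) := by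
    have : (fun s : ℝ => M * (2 * C * (s + v)) ^ n / n.factorial)
        = fun s : ℝ => (M * (2 * C) ^ n / n.factorial) * (s + v) ^ n := by
      funext s; rw [mul_pow]; ring
    rw [this, intervalIntegral.integral_const_mul, stmt14_integ_pow u v n]
  rw [e1, e2]
  have hfac : ((n + 1).factorial : ℝ) = (n + 1) * n.factorial := by
    rw [Nat.factorial_succ]; push_cast; ring
  have hexpv : (1 : ℝ) ≤ Real.exp (2 * C * v) := by
    rw [← Real.exp_zero]; exact Real.exp_le_exp.mpr (by positivity)
  have hfacpos : (0 : ℝ) < n.factorial := by exact_mod_cast n.factorial_pos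
  have hnpos : (0 : ℝ) < (n : ℝ) + 1 := by positivity
  have hb1 : C * (D * ((Real.exp (2 * C * (u + v)) - Real.exp (2 * C * v)) / (2 * C)))
      ≤ D * (Real.exp (2 * C * (u + v)) - 1) / 2 := by
    have heq : C * (D * ((Real.exp (2 * C * (u + v)) - Real.exp (2 * C * v)) / (2 * C)))
        = D * (Real.exp (2 * C * (u + v)) - Real.exp (2 * C * v)) / 2 := by
      field_simp
    have hkey : D * (Real.exp (2 * C * (u + v)) - Real.exp (2 * C * v))
        ≤ D * (Real.exp (2 * C * (u + v)) - 1) :=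
      mul_le_mul_of_nonneg_left (by linarith) hD
    rw [heq]; linarith
  have hb2 : C * (M * (2 * C) ^ n / n.factorial * (((u + v) ^ (n + 1) - v ^ (n + 1)) / (↑n + 1)))
      ≤ M * (2 * C * (u + v)) ^ (n + 1) / (2 * (n + 1).factorial) := by
    have hdiv : ((u + v) ^ (n + 1) - v ^ (n + 1)) / (↑n + 1)
        ≤ (u + v) ^ (n + 1) / (↑n + 1) := by
      gcongr
      exact sub_le_self _ (by positivity)
    have h1 : C * (M * (2 * C) ^ n / n.factorial * (((u + v) ^ (n + 1) - v ^ (n + 1)) / (↑n + 1)))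
        ≤ C * (M * (2 * C) ^ n / n.factorial * ((u + v) ^ (n + 1) / (↑n + 1))) :=
      mul_le_mul_of_nonneg_left
        (mul_le_mul_of_nonneg_left hdiv (by positivity)) hC.le
    have h2 : C * (M * (2 * C) ^ n / n.factorial * ((u + v) ^ (n + 1) / (↑n + 1)))
        = M * (2 * C * (u + v)) ^ (n + 1) / (2 * (n + 1).factorial) := by
      have hp : (2 * C * (u + v)) ^ (n + 1) = (2 * C) ^ (n + 1) * (u + v) ^ (n + 1) :=
        mul_pow _ _ _
      rw [hfac, hp, pow_succ]
      field_simp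
      ring
    linarith
  linarith

theorem stmt14 (a b C D : ℝ) (ha : 0 ≤ a) (hb : 0 ≤ b) (hC : 0 ≤ C) (hD : 0 ≤ D)
    (f : ℝ → ℝ → ℝ)
    (hcont : ContinuousOn (fun p : ℝ × ℝ => f p.1 p.2) (Set.Icc 0 a ×ˢ Set.Icc 0 b))
    (hnonneg : ∀ u ∈ Set.Icc (0 : ℝ) a, ∀ v ∈ Set.Icc (0 : ℝ) b, 0 ≤ f u v)
    (hineq : ∀ u ∈ Set.Icc (0 : ℝ) a, ∀ v ∈ Set.Icc (0 : ℝ) b,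
      f u v ≤ D + C * (∫ s in (0 : ℝ)..u, f s v) + C * ∫ s in (0 : ℝ)..v, f u s) :
    ∀ u ∈ Set.Icc (0 : ℝ) a, ∀ v ∈ Set.Icc (0 : ℝ) b,
      f u v ≤ D * Real.exp (2 * C * (u + v)) := by
  rcases eq_or_lt_of_le hC with hC0 | hCpos
  · -- trivial case C = 0
    intro u hu v hv
    have h := hineq u hu v hv
    rw [← hC0] at h ⊢
    simp only [zero_mul, add_zero, mul_zero, zero_mul] at h ⊢
    rw [Real.exp_zero, mul_one]
    linarith
  -- main case C > 0
  -- a uniform bound M on f over the rectangle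
  obtain ⟨M, hMb⟩ := (isCompact_Icc.prod isCompact_Icc).exists_bound_of_continuousOn hcont
  have hM : ∀ u ∈ Set.Icc (0:ℝ) a, ∀ v ∈ Set.Icc (0:ℝ) b, f u v ≤ M := by
    intro u hu v hv
    have := hMb (u, v) (Set.mk_mem_prod hu hv)
    exact (le_abs_self _).trans this
  have hM0 : 0 ≤ M := by
    have := hMb (0, 0) (Set.mk_mem_prod (Set.left_mem_Icc.mpr ha) (Set.left_mem_Icc.mpr hb))
    exact le_trans (abs_nonneg _) this
  -- slice continuity and integrability
  have hslice1 : ∀ v ∈ Set.Icc (0:ℝ) b, ContinuousOn (fun s => f s v) (Set.Icc 0 a) := by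
    intro v hv
    have hmap : Set.MapsTo (fun s : ℝ => (s, v)) (Set.Icc 0 a) (Set.Icc 0 a ×ˢ Set.Icc 0 b) :=
      fun s hs => Set.mk_mem_prod hs hv
    exact hcont.comp ((continuous_id.prodMk continuous_const).continuousOn) hmap
  have hslice2 : ∀ u ∈ Set.Icc (0:ℝ) a, ContinuousOn (fun s => f u s) (Set.Icc 0 b) := by
    intro u hu
    have hmap : Set.MapsTo (fun s : ℝ => (u, s)) (Set.Icc 0 b) (Set.Icc 0 a ×ˢ Set.Icc 0 b) :=
      fun s hs => Set.mk_mem_prod hu hs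
    exact hcont.comp ((continuous_const.prodMk continuous_id).continuousOn) hmap
  have hint1 : ∀ u ∈ Set.Icc (0:ℝ) a, ∀ v ∈ Set.Icc (0:ℝ) b,
      IntervalIntegrable (fun s => f s v) volume 0 u := by
    intro u hu v hv
    apply ContinuousOn.intervalIntegrable
    apply (hslice1 v hv).mono
    rw [Set.uIcc_of_le hu.1]
    exact Set.Icc_subset_Icc le_rfl hu.2
  have hint2 : ∀ u ∈ Set.Icc (0:ℝ) a, ∀ v ∈ Set.Icc (0:ℝ) b,
      IntervalIntegrable (fun s => f u s) volume 0 v := by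
    intro u hu v hv
    apply ContinuousOn.intervalIntegrable
    apply (hslice2 u hu).mono
    rw [Set.uIcc_of_le hv.1]
    exact Set.Icc_subset_Icc le_rfl hv.2
  -- the key induction
  have key : ∀ n : ℕ, ∀ u ∈ Set.Icc (0:ℝ) a, ∀ v ∈ Set.Icc (0:ℝ) b,
      f u v ≤ D * Real.exp (2 * C * (u + v)) + M * (2 * C * (u + v)) ^ n / n.factorial := by
    intro n
    induction n with
    | zero =>
      intro u hu v hv
      have hE : 0 ≤ D * Real.exp (2 * C * (u + v)) :=
        mul_nonneg hD (Real.exp_pos _).le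
      simp only [pow_zero, Nat.factorial_zero, Nat.cast_one, mul_one]
      have := hM u hu v hv
      linarith
    | succ n ih =>
      intro u hu v hv
      set g1 : ℝ → ℝ := fun s =>
        D * Real.exp (2 * C * (s + v)) + M * (2 * C * (s + v)) ^ n / n.factorial with hg1
      set g2 : ℝ → ℝ := fun s =>
        D * Real.exp (2 * C * (s + u)) + M * (2 * C * (s + u)) ^ n / n.factorial with hg2
      have hI1 : ∫ s in (0:ℝ)..u, f s v ≤ ∫ s in (0:ℝ)..u, g1 s := by
        apply intervalIntegral.integral_mono_on hu.1 (hint1 u hu v hv)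
          (Continuous.intervalIntegrable (by fun_prop) 0 u)
        intro s hs
        exact ih s ⟨hs.1, hs.2.trans hu.2⟩ v hv
      have hI2 : ∫ s in (0:ℝ)..v, f u s ≤ ∫ s in (0:ℝ)..v, g2 s := by
        apply intervalIntegral.integral_mono_on hv.1 (hint2 u hu v hv)
          (Continuous.intervalIntegrable (by fun_prop) 0 v)
        intro s hs
        have := ih u hu s ⟨hs.1, hs.2.trans hv.2⟩
        simpa [hg2, add_comm] using this
      have hB1 : C * ∫ s in (0:ℝ)..u, g1 s
          ≤ D * (Real.exp (2 * C * (u + v)) - 1) / 2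
            + M * (2 * C * (u + v)) ^ (n + 1) / (2 * (n + 1).factorial) :=
        stmt14_helper C D M v u hCpos hD hM0 hv.1 hu.1 n
      have hB2 : C * ∫ s in (0:ℝ)..v, g2 s
          ≤ D * (Real.exp (2 * C * (u + v)) - 1) / 2
            + M * (2 * C * (u + v)) ^ (n + 1) / (2 * (n + 1).factorial) := by
        have := stmt14_helper C D M u v hCpos hD hM0 hu.1 hv.1 n
        rw [add_comm v u] at this
        exact this
      have hmain := hineq u hu v hv
      have hc1 : C * ∫ s in (0:ℝ)..u, f s v ≤ C * ∫ s in (0:ℝ)..u, g1 s :=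
        mul_le_mul_of_nonneg_left hI1 hCpos.le
      have hc2 : C * ∫ s in (0:ℝ)..v, f u s ≤ C * ∫ s in (0:ℝ)..v, g2 s :=
        mul_le_mul_of_nonneg_left hI2 hCpos.le
      have hsum : f u v ≤ D + (D * (Real.exp (2 * C * (u + v)) - 1) / 2
            + M * (2 * C * (u + v)) ^ (n + 1) / (2 * (n + 1).factorial))
          + (D * (Real.exp (2 * C * (u + v)) - 1) / 2
            + M * (2 * C * (u + v)) ^ (n + 1) / (2 * (n + 1).factorial)) := by
        linarith
      calc f u v ≤ _ := hsum
        _ = D * Real.exp (2 * C * (u + v))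
            + M * (2 * C * (u + v)) ^ (n + 1) / (n + 1).factorial := by ring
  -- pass to the limit n → ∞
  intro u hu v hv
  have hten : Filter.Tendsto
      (fun n : ℕ => D * Real.exp (2 * C * (u + v)) + M * (2 * C * (u + v)) ^ n / n.factorial)
      Filter.atTop (nhds (D * Real.exp (2 * C * (u + v)))) := by
    have h0 : Filter.Tendsto (fun n : ℕ => (2 * C * (u + v)) ^ n / (n.factorial : ℝ))
        Filter.atTop (nhds 0) := FloorSemiring.tendsto_pow_div_factorial_atTop _
    have := (h0.const_mul M).const_add (D * Real.exp (2 * C * (u + v)))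
    simpa [mul_div_assoc] using this
  exact ge_of_tendsto hten (Filter.Eventually.of_forall fun n => key n u hu v hv)
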